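/- Let R be a commutative ring whose set of zero-divisors Z(R) is a finite union of prime ideals. Then R is a Marot ring, i.e., every regular ideal of R is generated by its regular elements. -/

import Mathlib

private lemma coset_avoid {R : Type*} [CommRing R] (s : Finset (Ideal R)) :
    (∀ p ∈ s, p.IsPrime) → ∀ x z : R, (∀ p ∈ s, z ∉ p) →
      ∃ t : R, ∀ p ∈ s, x + t * z ∉ p := by
  classical
  induction s using Finset.strongInduction with
  | _ s ih =>
    intro hs x z hz
    rcases s.eq_empty_or_nonempty with rfl | hne
    · exact ⟨0, by simp⟩
    obtain ⟨p, hp, hmin⟩ : ∃ p ∈ s, ∀ x ∈ s, ¬x < p := by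
      obtain ⟨m, hm⟩ := Finset.exists_minimal hne
      exact ⟨m, hm.1, fun x hx hlt => lt_irrefl _ (lt_of_lt_of_le hlt (hm.2 hx hlt.le))⟩
    obtain ⟨t, ht⟩ := ih (s.erase p) (Finset.erase_ssubset hp)
      (fun q hq => hs q (Finset.mem_of_mem_erase hq)) x z
      (fun q hq => hz q (Finset.mem_of_mem_erase hq))
    by_cases hxp : x + t * z ∈ p
    · have hpick : ∀ q ∈ s.erase p, ∃ a, a ∈ q ∧ a ∉ p := by
        intro q hq
        by_contra h
        push_neg at h
        have hle : q ≤ p := fun a ha => h a ha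
        have hne' : q ≠ p := Finset.ne_of_mem_erase hq
        exact hmin q (Finset.mem_of_mem_erase hq) (lt_of_le_of_ne hle hne')
      choose! a ha hna using hpick
      set u : R := ∏ q ∈ s.erase p, a q with hu
      have hup : u ∉ p := by
        haveI := hs p hp
        rw [hu, Ideal.IsPrime.prod_mem_iff]
        push_neg
        exact hna
      have huq : ∀ q ∈ s.erase p, u ∈ q := by
        intro q hq
        rw [hu, Finset.prod_eq_mul_prod_sdiff_singleton_of_mem hq]
        exact Ideal.mul_mem_right _ _ (ha q hq)
      refine ⟨t + u, fun q hq => ?_⟩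
      have key : x + (t + u) * z = (x + t * z) + u * z := by ring
      rw [key]
      rcases eq_or_ne q p with rfl | hqp
      · intro hmem
        have : u * z ∈ q := by
          have := q.sub_mem hmem hxp
          simpa using this
        rcases (hs q hq).mem_or_mem this with h | h
        exacts [hup h, hz q hq h]
      · intro hmem
        have hq' : q ∈ s.erase p := Finset.mem_erase.2 ⟨hqp, hq⟩
        have : x + t * z ∈ q := by
          have := q.sub_mem hmem (Ideal.mul_mem_right z q (huq q hq'))
          simpa using this
        exact ht q hq' this
    · refine ⟨t, fun q hq => ?_⟩
      rcases eq_or_ne q p with rfl | hqp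
      · exact hxp
      · exact ht q (Finset.mem_erase.2 ⟨hqp, hq⟩)

/-- If the set of zero-divisors of a commutative ring `R` is a finite union of prime
ideals, then `R` is a Marot ring: every regular ideal is generated by its regular
elements. -/
theorem stmt2 {R : Type*} [CommRing R] (s : Finset (Ideal R))
    (hs : ∀ p ∈ s, p.IsPrime)
    (hZ : {x : R | x ∉ nonZeroDivisors R} = ⋃ p ∈ s, (p : Set R)) :
    ∀ I : Ideal R, (∃ z ∈ I, z ∈ nonZeroDivisors R) →
      I = Ideal.span ((I : Set R) ∩ (nonZeroDivisors R : Set R)) := by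
  intro I ⟨z, hzI, hzreg⟩
  apply le_antisymm
  · intro x hx
    have hznotp : ∀ p ∈ s, z ∉ p := by
      intro p hp hzp
      have : z ∈ {x : R | x ∉ nonZeroDivisors R} := by
        rw [hZ]; exact Set.mem_biUnion hp hzp
      exact this hzreg
    obtain ⟨t, ht⟩ := coset_avoid s hs x z hznotp
    have hreg : x + t * z ∈ nonZeroDivisors R := by
      by_contra h
      have : x + t * z ∈ ⋃ p ∈ s, (p : Set R) := by rw [← hZ]; exact h
      obtain ⟨p, hp, hmem⟩ := Set.mem_iUnion₂.1 this
      exact ht p hp hmem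
    have h1 : x + t * z ∈ Ideal.span ((I : Set R) ∩ (nonZeroDivisors R : Set R)) :=
      Ideal.subset_span ⟨I.add_mem hx (I.mul_mem_left t hzI), hreg⟩
    have h2 : z ∈ Ideal.span ((I : Set R) ∩ (nonZeroDivisors R : Set R)) :=
      Ideal.subset_span ⟨hzI, hzreg⟩
    have : x = (x + t * z) - t * z := by ring
    rw [this]
    exact Submodule.sub_mem _ h1 (Ideal.mul_mem_left _ t h2)
  · rw [Ideal.span_le]
    exact fun a ha => ha.1
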